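/- Let (Ω, F, μ) be a probability space and E a finite-dimensional real inner product space. Let ℓ : E → ℝ be a differentiable function whose gradient is L-Lipschitz (‖∇ℓ(x) − ∇ℓ(y)‖ ≤ L‖x − y‖ for all x, y). Let (Xₙ) be measurable random vectors Ω → E and (Dₙ) differentiable maps E → E. Assume: (i) ‖Dₙ(Xₙ) − Xₙ‖ → 0 in probability; (ii) the operator norm ‖fderiv Dₙ(Xₙ) − id‖ → 0 in probability; (iii) there is a constant M such that for every n, ‖∇ℓ(Dₙ(Xₙ))‖ ≤ M almost everywhere. Then the sequence ‖∇(ℓ ∘ Dₙ)(Xₙ) − ∇ℓ(Xₙ)‖ converges to 0 in probability, where ∇(ℓ ∘ Dₙ) denotes the gradient of the composed map ℓ ∘ Dₙ. -/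

import Mathlib

open MeasureTheory Filter Topology

lemma grad_sub_norm {E : Type*} [NormedAddCommGroup E] [InnerProductSpace ℝ E]
    [CompleteSpace E] (f g : E → ℝ) (x y : E) :
    ‖gradient f x - gradient g y‖ = ‖fderiv ℝ f x - fderiv ℝ g y‖ := by
  rw [gradient, gradient, ← map_sub]
  exact LinearIsometryEquiv.norm_map _ _

lemma grad_norm {E : Type*} [NormedAddCommGroup E] [InnerProductSpace ℝ E]
    [CompleteSpace E] (f : E → ℝ) (x : E) :
    ‖gradient f x‖ = ‖fderiv ℝ f x‖ := by
  rw [gradient]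
  exact LinearIsometryEquiv.norm_map _ _

/-- **Asymptotic validity of constraint gradient substitution (full form).**
If `ℓ` is differentiable with `L`-Lipschitz gradient, the `Dₙ` are differentiable,
`‖Dₙ(Xₙ) − Xₙ‖ → 0` in probability, the Jacobians of the `Dₙ` at `Xₙ` converge to the
identity in operator norm in probability, and `‖∇ℓ(Dₙ(Xₙ))‖` is a.e. bounded by `M`,
then `‖∇(ℓ ∘ Dₙ)(Xₙ) − ∇ℓ(Xₙ)‖ → 0` in probability. -/
theorem gradient_through_denoiser_in_probability
    {Ω : Type*} [MeasurableSpace Ω] (μ : Measure Ω) [IsProbabilityMeasure μ]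
    {E : Type*} [NormedAddCommGroup E] [InnerProductSpace ℝ E] [FiniteDimensional ℝ E]
    [MeasurableSpace E] [BorelSpace E]
    (ℓ : E → ℝ) (hℓ : Differentiable ℝ ℓ) (L : ℝ)
    (hLip : ∀ x y : E, ‖gradient ℓ x - gradient ℓ y‖ ≤ L * ‖x - y‖)
    (X : ℕ → Ω → E) (hX : ∀ n, Measurable (X n))
    (D : ℕ → E → E) (hD : ∀ n, Differentiable ℝ (D n))
    (hdenoise : ∀ ε : ℝ, 0 < ε →
      Tendsto (fun n => μ {ω | ε ≤ ‖D n (X n ω) - X n ω‖}) atTop (𝓝 0))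
    (hjac : ∀ ε : ℝ, 0 < ε →
      Tendsto (fun n => μ {ω | ε ≤ ‖fderiv ℝ (D n) (X n ω) - ContinuousLinearMap.id ℝ E‖})
        atTop (𝓝 0))
    (M : ℝ) (hbd : ∀ n, ∀ᵐ ω ∂μ, ‖gradient ℓ (D n (X n ω))‖ ≤ M) :
    ∀ ε : ℝ, 0 < ε →
      Tendsto (fun n => μ {ω | ε ≤ ‖gradient (ℓ ∘ D n) (X n ω) - gradient ℓ (X n ω)‖})
        atTop (𝓝 0) := by
  intro ε hε
  obtain ⟨M', hM'def⟩ : ∃ M', M' = max M 0 + 1 := ⟨_, rfl⟩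
  obtain ⟨L', hL'def⟩ : ∃ L', L' = max L 1 := ⟨_, rfl⟩
  have hM'pos : 0 < M' := by rw [hM'def]; positivity
  have hL'pos : 0 < L' := hL'def ▸ lt_of_lt_of_le one_pos (le_max_right _ _)
  have hMM' : M ≤ M' := by rw [hM'def]; linarith [le_max_left M (0:ℝ)]
  have hLip' : ∀ x y : E, ‖gradient ℓ x - gradient ℓ y‖ ≤ L' * ‖x - y‖ := fun x y =>
    (hLip x y).trans (mul_le_mul_of_nonneg_right (hL'def ▸ le_max_left _ _) (norm_nonneg _))
  -- pointwise bound
  have key : ∀ n ω, ‖gradient ℓ (D n (X n ω))‖ ≤ M' →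
      ‖gradient (ℓ ∘ D n) (X n ω) - gradient ℓ (X n ω)‖ ≤
        M' * ‖fderiv ℝ (D n) (X n ω) - ContinuousLinearMap.id ℝ E‖ +
        L' * ‖D n (X n ω) - X n ω‖ := by
    intro n ω hM
    set x := X n ω with hx
    set f := fderiv ℝ ℓ (D n x) with hf
    set g := fderiv ℝ ℓ x with hg
    set J := fderiv ℝ (D n) x with hJ
    have hcomp : fderiv ℝ (ℓ ∘ D n) x = f.comp J :=
      fderiv_comp x (hℓ _) ((hD n) x)
    have h1 : ‖gradient (ℓ ∘ D n) x - gradient ℓ x‖ = ‖f.comp J - g‖ := by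
      rw [grad_sub_norm, hcomp]
    have hdecomp : f.comp J - g = f.comp (J - ContinuousLinearMap.id ℝ E) + (f - g) := by
      rw [ContinuousLinearMap.comp_sub, ContinuousLinearMap.comp_id]; abel
    have h2 : ‖f.comp J - g‖ ≤ ‖f‖ * ‖J - ContinuousLinearMap.id ℝ E‖ + ‖f - g‖ := by
      rw [hdecomp]
      exact (norm_add_le _ _).trans
        (add_le_add (ContinuousLinearMap.opNorm_comp_le _ _) le_rfl)
    have hfM : ‖f‖ ≤ M' := by rw [hf, ← grad_norm]; exact hM
    have hfg : ‖f - g‖ ≤ L' * ‖D n x - x‖ := by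
      rw [hf, hg, ← grad_sub_norm]; exact hLip' _ _
    calc ‖gradient (ℓ ∘ D n) x - gradient ℓ x‖ = ‖f.comp J - g‖ := h1
      _ ≤ ‖f‖ * ‖J - ContinuousLinearMap.id ℝ E‖ + ‖f - g‖ := h2
      _ ≤ M' * ‖J - ContinuousLinearMap.id ℝ E‖ + L' * ‖D n x - x‖ := by
          gcongr
  -- set inclusion
  have hsub : ∀ n, {ω | ε ≤ ‖gradient (ℓ ∘ D n) (X n ω) - gradient ℓ (X n ω)‖} ⊆
      {ω | ε / (2 * M') ≤ ‖fderiv ℝ (D n) (X n ω) - ContinuousLinearMap.id ℝ E‖} ∪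
      {ω | ε / (2 * L') ≤ ‖D n (X n ω) - X n ω‖} ∪
      {ω | ¬ ‖gradient ℓ (D n (X n ω))‖ ≤ M'} := by
    intro n ω hω
    by_cases hM : ‖gradient ℓ (D n (X n ω))‖ ≤ M'
    · have := (key n ω hM).trans' hω
      by_cases hcase : ε / 2 ≤ M' * ‖fderiv ℝ (D n) (X n ω) - ContinuousLinearMap.id ℝ E‖
      · left; left
        have := (div_le_iff₀' hM'pos).mpr hcase
        simpa [div_div] using this
      · left; right
        push_neg at hcase
        have h2 : ε / 2 ≤ L' * ‖D n (X n ω) - X n ω‖ := by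
          have hω' : ε ≤ ‖gradient (ℓ ∘ D n) (X n ω) - gradient ℓ (X n ω)‖ := hω
          linarith
        have := (div_le_iff₀' hL'pos).mpr h2
        simpa [div_div] using this
    · right; exact hM
  -- measure bound
  have hnull : ∀ n, μ {ω | ¬ ‖gradient ℓ (D n (X n ω))‖ ≤ M'} = 0 := by
    intro n
    refine measure_mono_null ?_ ((ae_iff).mp (hbd n))
    intro ω hω
    simp only [Set.mem_setOf_eq] at *
    intro h
    exact hω (h.trans hMM')
  have hbound : ∀ n, μ {ω | ε ≤ ‖gradient (ℓ ∘ D n) (X n ω) - gradient ℓ (X n ω)‖} ≤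
      μ {ω | ε / (2 * M') ≤ ‖fderiv ℝ (D n) (X n ω) - ContinuousLinearMap.id ℝ E‖} +
      μ {ω | ε / (2 * L') ≤ ‖D n (X n ω) - X n ω‖} := by
    intro n
    calc μ _ ≤ μ (_ ∪ _ ∪ _) := measure_mono (hsub n)
      _ ≤ μ (_ ∪ _) + μ _ := measure_union_le _ _
      _ = μ (_ ∪ _) + 0 := by rw [hnull n]
      _ = μ (_ ∪ _) := by rw [add_zero]
      _ ≤ _ := measure_union_le _ _
  have h1 := hjac (ε / (2 * M')) (by positivity)
  have h2 := hdenoise (ε / (2 * L')) (by positivity)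
  have hsum := h1.add h2
  rw [add_zero] at hsum
  exact tendsto_of_tendsto_of_tendsto_of_le_of_le tendsto_const_nhds hsum
    (fun n => zero_le) hbound
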